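/- Let u be a C² solution of the system Δu = ∇H(u) on ℝ^N such that u_i(x) H_{u_i}(u(x)) ≥ 0 for every i and every x ∈ ℝ^N. Then there is a universal constant C > 0 (independent of u, H, N, m and R) such that Σ_{i=1}^m ∫_{B_R} |∇u_i|² dx ≤ C R^{−2} Σ_{i=1}^m ∫_{B_{2R} \ B_R} u_i² dx for every R > 0. -/

import Mathlib

open MeasureTheory Metric Filter Finset

noncomputable section

/-- Partial derivative of `f` at `x` in the `k`-th coordinate direction of `ℝ^N`. -/
def pd {N : ℕ} (f : EuclideanSpace ℝ (Fin N) → ℝ) (k : Fin N)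
    (x : EuclideanSpace ℝ (Fin N)) : ℝ :=
  fderiv ℝ f x (EuclideanSpace.single k 1)

/-- Laplacian of `f` at `x`: the sum of the pure second partial derivatives. -/
def lap {N : ℕ} (f : EuclideanSpace ℝ (Fin N) → ℝ) (x : EuclideanSpace ℝ (Fin N)) : ℝ :=
  ∑ k, pd (pd f k) k x

/-- `H_{u_i}`, the `i`-th partial derivative of `H : ℝ^m → ℝ`. -/
def Hp {m : ℕ} (H : EuclideanSpace ℝ (Fin m) → ℝ) (i : Fin m)
    (p : EuclideanSpace ℝ (Fin m)) : ℝ :=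
  fderiv ℝ H p (EuclideanSpace.single i 1)

/-- `H_{u_i u_j}`, the second mixed partial derivative of `H : ℝ^m → ℝ`. -/
def Hpp {m : ℕ} (H : EuclideanSpace ℝ (Fin m) → ℝ) (i j : Fin m)
    (p : EuclideanSpace ℝ (Fin m)) : ℝ :=
  fderiv ℝ (Hp H i) p (EuclideanSpace.single j 1)

/-- `u` solves the system `Δ u = ∇H(u)` on `Ω`. -/
def IsSolution {N m : ℕ} (H : EuclideanSpace ℝ (Fin m) → ℝ)
    (u : EuclideanSpace ℝ (Fin N) → EuclideanSpace ℝ (Fin m))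
    (Ω : Set (EuclideanSpace ℝ (Fin N))) : Prop :=
  ∀ i : Fin m, ∀ x ∈ Ω, lap (fun y => u y i) x = Hp H i (u x)

/-- `u` is a stable solution of `Δ u = ∇H(u)` on `Ω`: the second variation of the
energy is nonnegative on test functions `ζ_1, …, ζ_m ∈ C¹_c(Ω)`. -/
def Stable {N m : ℕ} (H : EuclideanSpace ℝ (Fin m) → ℝ)
    (u : EuclideanSpace ℝ (Fin N) → EuclideanSpace ℝ (Fin m))
    (Ω : Set (EuclideanSpace ℝ (Fin N))) : Prop :=
  ∀ ζ : Fin m → EuclideanSpace ℝ (Fin N) → ℝ,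
    (∀ i, ContDiff ℝ 1 (ζ i)) → (∀ i, HasCompactSupport (ζ i)) →
    (∀ i, tsupport (ζ i) ⊆ Ω) →
    0 ≤ (∑ i, ∫ x in Ω, ‖gradient (ζ i) x‖ ^ 2) +
        ∑ i, ∑ j, ∫ x in Ω, Hpp H i j (u x) * ζ i x * ζ j x

/-- `u` is a pointwise stable solution of `Δ u = ∇H(u)` on `Ω`: there are `λ ≥ 0`
and nowhere-vanishing `C²` functions `φ_i` with `Δ φ_i = Σ_j H_{u_i u_j}(u) φ_j - λ φ_i`
and `H_{u_i u_j}(u) φ_i φ_j ≤ 0` for `i < j`. -/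
def PointwiseStable {N m : ℕ} (H : EuclideanSpace ℝ (Fin m) → ℝ)
    (u : EuclideanSpace ℝ (Fin N) → EuclideanSpace ℝ (Fin m))
    (Ω : Set (EuclideanSpace ℝ (Fin N))) : Prop :=
  ∃ (lam : ℝ) (φ : Fin m → EuclideanSpace ℝ (Fin N) → ℝ),
    0 ≤ lam ∧ (∀ i, ContDiff ℝ 2 (φ i)) ∧ (∀ i, ∀ x ∈ Ω, φ i x ≠ 0) ∧
    (∀ i, ∀ x ∈ Ω, lap (φ i) x = (∑ j, Hpp H i j (u x) * φ j x) - lam * φ i x) ∧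
    (∀ i j : Fin m, i < j → ∀ x ∈ Ω, Hpp H i j (u x) * φ i x * φ j x ≤ 0)

/-- The system `Δ u = ∇H(u)` is orientable along `u`: there exist nonzero `C¹`
functions `θ_i`, none of which changes sign, with `H_{u_i u_j}(u) θ_i θ_j ≤ 0` for `i < j`. -/
def OrientableAlong {N m : ℕ} (H : EuclideanSpace ℝ (Fin m) → ℝ)
    (u : EuclideanSpace ℝ (Fin N) → EuclideanSpace ℝ (Fin m)) : Prop :=
  ∃ θ : Fin m → EuclideanSpace ℝ (Fin N) → ℝ,
    (∀ i, ContDiff ℝ 1 (θ i)) ∧ (∀ i, ∃ x, θ i x ≠ 0) ∧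
    (∀ i, (∀ x, 0 ≤ θ i x) ∨ (∀ x, θ i x ≤ 0)) ∧
    (∀ i j : Fin m, i < j → ∀ x, Hpp H i j (u x) * θ i x * θ j x ≤ 0)

/-- A function `w : ℝ^N → ℝ` is one-dimensional. -/
def OneDim {N : ℕ} (w : EuclideanSpace ℝ (Fin N) → ℝ) : Prop :=
  ∃ (a : EuclideanSpace ℝ (Fin N)) (g : ℝ → ℝ), ∀ x, w x = g (inner ℝ a x)

/-- `u` is an `H`-monotone solution with respect to the coordinate direction `ν`. -/
def HMonotone {N m : ℕ} (H : EuclideanSpace ℝ (Fin m) → ℝ)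
    (u : EuclideanSpace ℝ (Fin N) → EuclideanSpace ℝ (Fin m)) (ν : Fin N) : Prop :=
  (∀ (i : Fin m) (x : EuclideanSpace ℝ (Fin N)), pd (fun y => u y i) ν x ≠ 0) ∧
  (∀ i j : Fin m, i < j → ∀ x,
    Hpp H i j (u x) * (pd (fun y => u y i) ν x * pd (fun y => u y j) ν x) ≤ 0)

/-- The point `(x', t) ∈ ℝ^{n+1}` built from `x' ∈ ℝ^n` and a last coordinate `t`. -/
def snocPt {n : ℕ} (x' : EuclideanSpace ℝ (Fin n)) (t : ℝ) :
    EuclideanSpace ℝ (Fin (n + 1)) := WithLp.toLp 2 (Fin.snoc (α := fun _ => ℝ) x'.ofLp t)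


private lemma smoothTransition_deriv_bound : ∃ M : ℝ, 1 ≤ M ∧
    (∀ s : ℝ, |deriv Real.smoothTransition s| ≤ M) ∧
    (∀ s : ℝ, s < 0 → deriv Real.smoothTransition s = 0) ∧
    (∀ s : ℝ, 1 < s → deriv Real.smoothTransition s = 0) := by
  have h0 : ∀ s : ℝ, s < 0 → deriv Real.smoothTransition s = 0 := by
    intro s hs
    have he : Real.smoothTransition =ᶠ[nhds s] fun _ => (0 : ℝ) := by
      filter_upwards [Iio_mem_nhds hs] with t ht
      exact Real.smoothTransition.zero_of_nonpos ht.le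
    rw [he.deriv_eq]; simp
  have h1 : ∀ s : ℝ, 1 < s → deriv Real.smoothTransition s = 0 := by
    intro s hs
    have he : Real.smoothTransition =ᶠ[nhds s] fun _ => (1 : ℝ) := by
      filter_upwards [Ioi_mem_nhds hs] with t ht
      exact Real.smoothTransition.one_of_one_le ht.le
    rw [he.deriv_eq]; simp
  obtain ⟨C, hC⟩ := (isCompact_Icc (a := (0:ℝ)) (b := 1)).exists_bound_of_continuousOn
    ((Real.smoothTransition.contDiff.continuous_deriv le_rfl).continuousOn)
  refine ⟨max C 1, le_max_right _ _, ?_, h0, h1⟩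
  intro s
  rcases lt_or_ge s 0 with hs | hs
  · rw [h0 s hs]; simpa using le_max_of_le_right (α := ℝ) zero_le_one
  rcases le_or_gt s 1 with hs' | hs'
  · exact le_max_of_le_left (by simpa [Real.norm_eq_abs] using hC s ⟨hs, hs'⟩)
  · rw [h1 s hs']; simpa using le_max_of_le_right (α := ℝ) zero_le_one

private lemma contDiff_pd' {N : ℕ} {f : EuclideanSpace ℝ (Fin N) → ℝ} {n r : ℕ}
    (hf : ContDiff ℝ r f) (h : n + 1 ≤ r) (k : Fin N) : ContDiff ℝ n (pd f k) :=
  (hf.fderiv_right (by exact_mod_cast h)).clm_apply contDiff_const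

private lemma euclid_norm_sq {N : ℕ} (x : EuclideanSpace ℝ (Fin N)) :
    ‖x‖ ^ 2 = ∑ k, (x k) ^ 2 := by
  rw [EuclideanSpace.norm_eq, Real.sq_sqrt (by positivity)]
  simp [Real.norm_eq_abs, sq_abs]

private lemma norm_gradient_sq' {N : ℕ} (f : EuclideanSpace ℝ (Fin N) → ℝ)
    (x : EuclideanSpace ℝ (Fin N)) : ‖gradient f x‖ ^ 2 = ∑ k, (pd f k x) ^ 2 := by
  rw [euclid_norm_sq]
  refine Finset.sum_congr rfl fun k _ => ?_
  have h : (inner ℝ (gradient f x) (EuclideanSpace.single k (1:ℝ)) : ℝ)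
      = fderiv ℝ f x (EuclideanSpace.single k 1) :=
    InnerProductSpace.toDual_symm_apply
  rw [EuclideanSpace.inner_single_right] at h
  simp only [RCLike.conj_to_real, one_mul] at h
  rw [pd, ← h]

private lemma pd_mul' {N : ℕ} {f g : EuclideanSpace ℝ (Fin N) → ℝ}
    {x : EuclideanSpace ℝ (Fin N)} (hf : DifferentiableAt ℝ f x)
    (hg : DifferentiableAt ℝ g x) (k : Fin N) :
    pd (fun y => f y * g y) k x = pd f k x * g x + f x * pd g k x := by
  unfold pd
  rw [fderiv_fun_mul hf hg]
  simp only [ContinuousLinearMap.add_apply, ContinuousLinearMap.smul_apply, smul_eq_mul]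
  ring

private lemma pd_sq' {N : ℕ} {f : EuclideanSpace ℝ (Fin N) → ℝ}
    {x : EuclideanSpace ℝ (Fin N)} (hf : DifferentiableAt ℝ f x) (k : Fin N) :
    pd (fun y => f y ^ 2) k x = 2 * f x * pd f k x := by
  have h : (fun y => f y ^ 2) = fun y => f y * f y := by funext y; ring
  rw [h, pd_mul' hf hf k]; ring

private lemma cutoff_exists' {N : ℕ} {R M : ℝ} (hR : 0 < R) (hM1 : 1 ≤ M)
    (hMb : ∀ s, |deriv Real.smoothTransition s| ≤ M)
    (hM0 : ∀ s : ℝ, s < 0 → deriv Real.smoothTransition s = 0)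
    (hM1' : ∀ s : ℝ, 1 < s → deriv Real.smoothTransition s = 0) :
    ∃ η : EuclideanSpace ℝ (Fin N) → ℝ,
      ContDiff ℝ 2 η ∧ HasCompactSupport η ∧
      (∀ x, 0 ≤ η x) ∧ (∀ x, η x ≤ 1) ∧
      (∀ x ∈ ball (0 : EuclideanSpace ℝ (Fin N)) R, η x = 1) ∧
      (∀ x ∉ ball (0 : EuclideanSpace ℝ (Fin N)) (2*R) \ ball 0 R, ∀ k, pd η k x = 0) ∧
      (∀ x, ∑ k, (pd η k x) ^ 2 ≤ 4 * M ^ 2 / R ^ 2) := by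
  have hc : (0:ℝ) < 2 * R ^ 2 := by positivity
  set T := Real.smoothTransition with hTdef
  set a : EuclideanSpace ℝ (Fin N) → ℝ := fun x => (3 * R ^ 2 - ‖x‖ ^ 2) * (2 * R ^ 2)⁻¹
    with hadef
  set η : EuclideanSpace ℝ (Fin N) → ℝ := fun x => T (a x) with hηdef
  have haC : ContDiff ℝ 2 a :=
    (contDiff_const.sub (contDiff_norm_sq ℝ)).mul contDiff_const
  have hηC : ContDiff ℝ 2 η := (Real.smoothTransition.contDiff).comp haC
  have ha' : ∀ x, HasFDerivAt a ((2 * R ^ 2)⁻¹ •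
      ((0 : EuclideanSpace ℝ (Fin N) →L[ℝ] ℝ) - 2 • innerSL ℝ x)) x := by
    intro x
    have h1 : HasFDerivAt (fun y : EuclideanSpace ℝ (Fin N) => ‖y‖ ^ 2)
        (2 • innerSL ℝ x) x := (hasStrictFDerivAt_norm_sq x).hasFDerivAt
    exact ((hasFDerivAt_const (3 * R ^ 2) x).sub h1).mul_const ((2 * R ^ 2)⁻¹)
  have hη' : ∀ x, HasFDerivAt η ((deriv T (a x)) • ((2 * R ^ 2)⁻¹ •
      ((0 : EuclideanSpace ℝ (Fin N) →L[ℝ] ℝ) - 2 • innerSL ℝ x))) x := by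
    intro x
    have hT : HasDerivAt T (deriv T (a x)) (a x) :=
      ((Real.smoothTransition.contDiff (n := 1)).differentiable one_ne_zero (a x)).hasDerivAt
    exact hT.comp_hasFDerivAt x (ha' x)
  have hpdη : ∀ x k, pd η k x = -(deriv T (a x) * x k * (2 * R ^ 2)⁻¹ * 2) := by
    intro x k
    rw [pd, (hη' x).fderiv]
    simp only [ContinuousLinearMap.coe_smul', Pi.smul_apply, ContinuousLinearMap.coe_sub',
      Pi.sub_apply, ContinuousLinearMap.zero_apply, innerSL_apply_apply,
      ContinuousLinearMap.smul_apply, smul_eq_mul]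
    rw [EuclideanSpace.inner_single_right]
    simp only [RCLike.conj_to_real, one_mul, map_one]
    ring
  have hone : ∀ x : EuclideanSpace ℝ (Fin N), ‖x‖ < R → 1 < a x := by
    intro x hx
    have ht : ‖x‖ ^ 2 < R ^ 2 := by nlinarith [norm_nonneg x]
    have hcc : (2 * R ^ 2) * (2 * R ^ 2)⁻¹ = 1 := mul_inv_cancel₀ hc.ne'
    have hcp : (0:ℝ) < (2 * R ^ 2)⁻¹ := by positivity
    rw [hadef]
    nlinarith [mul_pos (sub_pos.2 ht) hcp]
  have hzero : ∀ x : EuclideanSpace ℝ (Fin N), 2 * R ≤ ‖x‖ → a x < 0 := by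
    intro x hx
    have ht : 4 * R ^ 2 ≤ ‖x‖ ^ 2 := by nlinarith [norm_nonneg x]
    have hcp : (0:ℝ) < (2 * R ^ 2)⁻¹ := by positivity
    rw [hadef]
    have : 3 * R ^ 2 - ‖x‖ ^ 2 < 0 := by nlinarith
    exact mul_neg_of_neg_of_pos this hcp
  refine ⟨η, hηC, ?_, fun x => Real.smoothTransition.nonneg _,
    fun x => Real.smoothTransition.le_one _, ?_, ?_, ?_⟩
  · apply HasCompactSupport.intro (isCompact_closedBall (0 : EuclideanSpace ℝ (Fin N)) (2*R))
    intro x hx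
    rw [mem_closedBall, dist_zero_right, not_le] at hx
    exact Real.smoothTransition.zero_of_nonpos (hzero x hx.le).le
  · intro x hx
    rw [mem_ball, dist_zero_right] at hx
    exact Real.smoothTransition.one_of_one_le (hone x hx).le
  · intro x hx k
    rw [Set.mem_diff, mem_ball, mem_ball, dist_zero_right] at hx
    push_neg at hx
    rcases lt_or_ge ‖x‖ (2 * R) with h2 | h2
    · have := hx h2
      rw [hpdη, hM1' _ (hone x this)]; ring
    · rw [hpdη, hM0 _ (hzero x h2)]; ring
  · intro x
    rcases le_or_gt (2 * R) ‖x‖ with h2 | h2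
    · have hz : ∀ k, pd η k x = 0 := fun k => by
        rw [hpdη, hM0 _ (hzero x h2)]; ring
      simp only [hz]
      simp
      positivity
    · have hb : ∀ k, (pd η k x) ^ 2 =
          (deriv T (a x))^2 * (2 * R ^ 2)⁻¹ ^ 2 * 4 * (x k) ^ 2 := by
        intro k; rw [hpdη]; ring
      calc ∑ k, (pd η k x) ^ 2
          = (deriv T (a x))^2 * (2 * R ^ 2)⁻¹ ^ 2 * 4 * ‖x‖ ^ 2 := by
            rw [euclid_norm_sq, Finset.mul_sum]
            exact Finset.sum_congr rfl fun k _ => hb k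
        _ ≤ 4 * M ^ 2 / R ^ 2 := by
            have h1 : (deriv T (a x))^2 ≤ M ^ 2 := by
              have := hMb (a x)
              nlinarith [abs_nonneg (deriv T (a x)), sq_abs (deriv T (a x))]
            have h2' : ‖x‖ ^ 2 ≤ 4 * R ^ 2 := by nlinarith [norm_nonneg x]
            have hinv : (2 * R ^ 2)⁻¹ ^ 2 = 1 / (4 * R ^ 4) := by
              rw [← one_div, div_pow]; ring_nf
            rw [hinv, div_eq_mul_inv, div_eq_mul_inv]
            have hstep : (deriv T (a x))^2 * (1 / (4 * R ^ 4)) * 4 * ‖x‖ ^ 2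
                ≤ M ^ 2 * (1 / (4 * R ^ 4)) * 4 * (4 * R ^ 2) := by
              apply mul_le_mul _ h2' (by positivity) (by positivity)
              apply mul_le_mul_of_nonneg_right _ (by norm_num)
              apply mul_le_mul_of_nonneg_right h1 (by positivity)
            calc (deriv T (a x))^2 * (1 / (4 * R ^ 4)) * 4 * ‖x‖ ^ 2
                ≤ M ^ 2 * (1 / (4 * R ^ 4)) * 4 * (4 * R ^ 2) := hstep
              _ = 4 * M ^ 2 * (R ^ 2)⁻¹ := by field_simp

/-- the Caccioppoli-type estimate for solutions with
`u_i H_{u_i}(u) ≥ 0`, with a universal constant. -/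
theorem stmt_16 : ∃ C : ℝ, 0 < C ∧
    ∀ (N m : ℕ) (H : EuclideanSpace ℝ (Fin m) → ℝ)
      (u : EuclideanSpace ℝ (Fin N) → EuclideanSpace ℝ (Fin m)),
      ContDiff ℝ 2 H → ContDiff ℝ 2 u → IsSolution H u Set.univ →
      (∀ (i : Fin m) (x : EuclideanSpace ℝ (Fin N)), 0 ≤ u x i * Hp H i (u x)) →
      ∀ R : ℝ, 0 < R →
        (∑ i, ∫ x in ball (0 : EuclideanSpace ℝ (Fin N)) R,
            ‖gradient (fun y => u y i) x‖ ^ 2)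
          ≤ C / R ^ 2 *
            ∑ i, ∫ x in ball (0 : EuclideanSpace ℝ (Fin N)) (2 * R) \ ball 0 R,
              (u x i) ^ 2 := by
  obtain ⟨M, hM1, hMb, hM0, hM1'⟩ := smoothTransition_deriv_bound
  have cutoff_exists : ∀ {N : ℕ} {R : ℝ}, 0 < R →
    ∃ η : EuclideanSpace ℝ (Fin N) → ℝ,
      ContDiff ℝ 2 η ∧ HasCompactSupport η ∧
      (∀ x, 0 ≤ η x) ∧ (∀ x, η x ≤ 1) ∧
      (∀ x ∈ ball (0 : EuclideanSpace ℝ (Fin N)) R, η x = 1) ∧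
      (∀ x ∉ ball (0 : EuclideanSpace ℝ (Fin N)) (2*R) \ ball 0 R, ∀ k, pd η k x = 0) ∧
      (∀ x, ∑ k, (pd η k x) ^ 2 ≤ 4 * M ^ 2 / R ^ 2) :=
    fun hR => cutoff_exists' hR hM1 hMb hM0 hM1'
  refine ⟨16 * M ^ 2, by positivity, ?_⟩
  intro N m H u hH hu hsol hpos R hR
  obtain ⟨η, hηC, hηcs, hηnn, hηle, hη1, hηpd0, hηpdbd⟩ := cutoff_exists (N := N) hR
  set A : Set (EuclideanSpace ℝ (Fin N)) := ball 0 (2*R) \ ball 0 R with hAdef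
  have hAmeas : MeasurableSet A := measurableSet_ball.diff measurableSet_ball
  have hηd : Differentiable ℝ η := hηC.differentiable two_ne_zero
  have hη2 : ContDiff ℝ (2:ℕ) η := by exact_mod_cast hηC
  have hpdηC : ∀ k, Continuous (pd η k) := fun k =>
    (contDiff_pd' (n := 1) hη2 (by norm_num) k).continuous
  have key : ∀ i : Fin m,
      (∫ x in ball (0 : EuclideanSpace ℝ (Fin N)) R, ‖gradient (fun y => u y i) x‖ ^ 2)
        ≤ 16 * M ^ 2 / R ^ 2 * ∫ x in A, (u x i) ^ 2 := by
    intro i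
    set ui : EuclideanSpace ℝ (Fin N) → ℝ := fun y => u y i with huidef
    have hui : ContDiff ℝ 2 ui := contDiff_euclidean.mp hu i
    have hui2 : ContDiff ℝ (2:ℕ) ui := by exact_mod_cast hui
    have hui1 : ContDiff ℝ 1 ui := hui.of_le one_le_two
    have hdui : Differentiable ℝ ui := hui1.differentiable one_ne_zero
    have hpdui : ∀ k, ContDiff ℝ (1:ℕ) (pd ui k) := fun k => contDiff_pd' (n := 1) hui2 (by norm_num) k
    set fη : EuclideanSpace ℝ (Fin N) → ℝ := fun x => η x ^ 2 * ui x with hfηdef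
    have hfηC : ContDiff ℝ 1 fη := ((hηC.of_le one_le_two).pow 2).mul hui1
    have hfηC1 : ContDiff ℝ (1:ℕ) fη := by exact_mod_cast hfηC
    have hcs0 : ∀ g : EuclideanSpace ℝ (Fin N) → ℝ, (∀ x, η x = 0 → g x = 0) →
        HasCompactSupport g := by
      intro g hg
      exact hηcs.mono fun x hx => by
        simp only [Function.mem_support] at hx ⊢
        exact fun h0 => hx (hg x h0)
    have hfηcs : HasCompactSupport fη := hcs0 _ fun x h0 => by simp [hfηdef, h0]
    have hint : ∀ g : EuclideanSpace ℝ (Fin N) → ℝ, Continuous g →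
        (∀ x, η x = 0 → g x = 0) → Integrable g := fun g hgc hg0 =>
      hgc.integrable_of_hasCompactSupport (hcs0 g hg0)
    have hHpC : Continuous fun x => Hp H i (u x) := by
      have hH2 : ContDiff ℝ (2:ℕ) H := by exact_mod_cast hH
      exact ((contDiff_pd' (n := 1) hH2 (by norm_num) i).continuous).comp hu.continuous
    set G : EuclideanSpace ℝ (Fin N) → ℝ := fun x => ∑ k, (pd ui k x) ^ 2 with hGdef
    set S : EuclideanSpace ℝ (Fin N) → ℝ := fun x => ∑ k, pd η k x * pd ui k x with hSdef
    set Gη : EuclideanSpace ℝ (Fin N) → ℝ := fun x => ∑ k, (pd η k x) ^ 2 with hGηdef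
    have hGc : Continuous G := by
      rw [hGdef]; exact continuous_finset_sum _ fun k _ => ((hpdui k).continuous.pow 2)
    have hSc : Continuous S := by
      rw [hSdef]
      exact continuous_finset_sum _ fun k _ => (hpdηC k).mul (hpdui k).continuous
    have hGηc : Continuous Gη := by
      rw [hGηdef]; exact continuous_finset_sum _ fun k _ => ((hpdηC k).pow 2)
    -- integrability of per-k integrands
    have hA1 : ∀ k, Integrable (fun x => pd fη k x * pd ui k x) := by
      intro k
      apply Continuous.integrable_of_hasCompactSupport
      · exact (contDiff_pd' (n := 0) hfηC1 (by norm_num) k).continuous.mul (hpdui k).continuous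
      · exact ((hfηcs.fderiv_apply ℝ (EuclideanSpace.single k 1)).mul_right)
    have hA2 : ∀ k, Integrable (fun x => fη x * pd (pd ui k) k x) := by
      intro k
      refine hint _ ?_ (fun x h0 => by simp [hfηdef, h0])
      exact hfηC.continuous.mul (contDiff_pd' (n := 0) (hpdui k) (by norm_num) k).continuous
    -- integration by parts
    have hIBP : ∀ k, ∫ x, fη x * pd (pd ui k) k x = - ∫ x, pd fη k x * pd ui k x := by
      intro k
      have hA3 : Integrable (fun x => fη x * pd ui k x) := by
        refine hint _ (hfηC.continuous.mul (hpdui k).continuous)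
          (fun x h0 => by simp [hfηdef, h0])
      exact integral_mul_fderiv_eq_neg_fderiv_mul_of_integrable (hA1 k) (hA2 k) hA3
        (fun x _ => hfηC.differentiable one_ne_zero x) (fun x _ => (hpdui k).differentiable one_ne_zero x)
    have hA4 : ∀ k, Integrable
        (fun x => fη x * pd (pd ui k) k x + pd fη k x * pd ui k x) :=
      fun k => (hA2 k).add (hA1 k)
    have hzero : ∫ x, (∑ k, (fη x * pd (pd ui k) k x + pd fη k x * pd ui k x)) = 0 := by
      rw [integral_finset_sum _ (fun k _ => hA4 k)]
      refine Finset.sum_eq_zero fun k _ => ?_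
      rw [integral_add (hA2 k) (hA1 k), hIBP k]; ring
    -- pointwise expansion of pd fη
    have hpdfη : ∀ x k, pd fη k x = 2 * η x * pd η k x * ui x + η x ^ 2 * pd ui k x := by
      intro x k
      rw [hfηdef]
      rw [pd_mul' (f := fun y => η y ^ 2) ((hηd x).pow 2) (hdui x) k, pd_sq' (hηd x) k]
    -- integrability of the three pieces
    have hInt1 : Integrable (fun x => η x ^ 2 * (ui x * Hp H i (u x))) :=
      hint _ ((hηC.continuous.pow 2).mul (hdui.continuous.mul hHpC))
        (fun x h0 => by simp [h0])
    have hInt2 : Integrable (fun x => η x ^ 2 * G x) :=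
      hint _ ((hηC.continuous.pow 2).mul hGc) (fun x h0 => by simp [h0])
    have hInt3 : Integrable (fun x => 2 * η x * ui x * S x) :=
      hint _ ((((continuous_const.mul hηC.continuous).mul hdui.continuous).mul hSc))
        (fun x h0 => by simp [h0])
    have hEq : (∫ x, η x ^ 2 * (ui x * Hp H i (u x))) + ((∫ x, η x ^ 2 * G x)
        + (∫ x, 2 * η x * ui x * S x)) = 0 := by
      have hInt23 : Integrable (fun x => η x ^ 2 * G x + 2 * η x * ui x * S x) :=
        hInt2.add hInt3
      rw [← integral_add hInt2 hInt3, ← integral_add hInt1 hInt23, ← hzero]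
      apply integral_congr_ae
      filter_upwards with x
      have hlap : (∑ k, pd (pd ui k) k x) = Hp H i (u x) := hsol i x (Set.mem_univ x)
      rw [← hlap]
      simp only [hpdfη]
      simp only [hpdfη, hfηdef, hGdef, hSdef, Finset.mul_sum]
      rw [← Finset.sum_add_distrib, ← Finset.sum_add_distrib]
      exact Finset.sum_congr rfl fun k _ => by ring
    -- positivity of the potential term
    have hpos1 : 0 ≤ ∫ x, η x ^ 2 * (ui x * Hp H i (u x)) :=
      integral_nonneg fun x => mul_nonneg (sq_nonneg _) (hpos i x)
    -- compact support of u² Gη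
    have hGη0 : ∀ x, x ∉ A → Gη x = 0 := by
      intro x hx
      rw [hGηdef]
      exact Finset.sum_eq_zero fun k _ => by rw [hηpd0 x hx k]; ring
    have hcsuGη : HasCompactSupport fun x => ui x ^ 2 * Gη x := by
      apply HasCompactSupport.intro (isCompact_closedBall (0 : EuclideanSpace ℝ (Fin N)) (2*R))
      intro x hx
      have hxA : x ∉ A := fun h => hx (ball_subset_closedBall h.1)
      rw [hGη0 x hxA]; ring
    have hIntuGη : Integrable (fun x => ui x ^ 2 * Gη x) :=
      ((hdui.continuous.pow 2).mul hGηc).integrable_of_hasCompactSupport hcsuGη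
    -- Cauchy-Schwarz pointwise
    have hptw : ∀ x, -(2 * η x * ui x * S x) ≤ η x ^ 2 * G x / 2 + 2 * (ui x ^ 2 * Gη x) := by
      intro x
      have h : η x ^ 2 * G x / 2 + 2 * (ui x ^ 2 * Gη x) + 2 * η x * ui x * S x
          = ∑ k, (η x * pd ui k x + 2 * ui x * pd η k x) ^ 2 / 2 := by
        rw [hGdef, hSdef, hGηdef]
        simp only [Finset.mul_sum, Finset.sum_div]
        rw [← Finset.sum_add_distrib, ← Finset.sum_add_distrib]
        refine Finset.sum_congr rfl fun k _ => ?_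
        ring
      have h2 : 0 ≤ ∑ k, (η x * pd ui k x + 2 * ui x * pd η k x) ^ 2 / 2 :=
        Finset.sum_nonneg fun k _ => div_nonneg (sq_nonneg _) (by norm_num)
      linarith
    -- main energy inequality
    have hmain : ∫ x, η x ^ 2 * G x ≤ 4 * ∫ x, ui x ^ 2 * Gη x := by
      have h4 : ∫ x, -(2 * η x * ui x * S x)
          ≤ ∫ x, (η x ^ 2 * G x / 2 + 2 * (ui x ^ 2 * Gη x)) :=
        integral_mono hInt3.neg ((hInt2.div_const 2).add (hIntuGη.const_mul 2)) hptw
      rw [integral_neg] at h4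
      rw [integral_add (hInt2.div_const 2) (hIntuGη.const_mul 2), integral_div,
        integral_const_mul] at h4
      linarith
    -- bound on the right-hand side
    have hRHS : ∫ x, ui x ^ 2 * Gη x ≤ 4 * M ^ 2 / R ^ 2 * ∫ x in A, (u x i) ^ 2 := by
      have hIA : IntegrableOn (fun x => (u x i) ^ 2) A :=
        (((hdui.continuous.pow 2).continuousOn).integrableOn_compact
          (isCompact_closedBall (0 : EuclideanSpace ℝ (Fin N)) (2*R))).mono_set
          (fun x hx => ball_subset_closedBall hx.1)
      have hind : ∫ x in A, (u x i) ^ 2 = ∫ x, A.indicator (fun x => (u x i) ^ 2) x :=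
        (integral_indicator hAmeas).symm
      rw [hind, ← integral_const_mul]
      apply integral_mono hIntuGη
        (((integrable_indicator_iff hAmeas).2 hIA).const_mul _)
      intro x
      show ui x ^ 2 * Gη x ≤ 4 * M ^ 2 / R ^ 2 * A.indicator (fun x => u x i ^ 2) x
      by_cases hx : x ∈ A
      · rw [Set.indicator_of_mem hx]
        have hb : Gη x ≤ 4 * M ^ 2 / R ^ 2 := by rw [hGηdef]; exact hηpdbd x
        have : ui x ^ 2 * Gη x ≤ ui x ^ 2 * (4 * M ^ 2 / R ^ 2) :=
          mul_le_mul_of_nonneg_left hb (sq_nonneg _)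
        calc ui x ^ 2 * Gη x ≤ ui x ^ 2 * (4 * M ^ 2 / R ^ 2) := this
          _ = 4 * M ^ 2 / R ^ 2 * (u x i) ^ 2 := by rw [huidef]; ring
      · rw [Set.indicator_of_notMem hx, hGη0 x hx]
        simp
    -- bound on the left-hand side
    have hL : ∫ x in ball (0 : EuclideanSpace ℝ (Fin N)) R, ‖gradient ui x‖ ^ 2
        ≤ ∫ x, η x ^ 2 * G x := by
      have hgr : ∀ x, ‖gradient ui x‖ ^ 2 = G x := fun x => by
        rw [norm_gradient_sq', hGdef]
      have hIb : IntegrableOn G (ball (0 : EuclideanSpace ℝ (Fin N)) R) :=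
        ((hGc.continuousOn).integrableOn_compact
          (isCompact_closedBall (0 : EuclideanSpace ℝ (Fin N)) R)).mono_set
          ball_subset_closedBall
      have hGnn : ∀ x, 0 ≤ G x := fun x => by
        rw [hGdef]; exact Finset.sum_nonneg fun k _ => sq_nonneg _
      calc ∫ x in ball (0 : EuclideanSpace ℝ (Fin N)) R, ‖gradient ui x‖ ^ 2
          = ∫ x in ball (0 : EuclideanSpace ℝ (Fin N)) R, G x := by
            apply integral_congr_ae
            filter_upwards with x using hgr x
        _ = ∫ x, (ball (0 : EuclideanSpace ℝ (Fin N)) R).indicator G x :=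
            (integral_indicator measurableSet_ball).symm
        _ ≤ ∫ x, η x ^ 2 * G x := by
            apply integral_mono ((integrable_indicator_iff measurableSet_ball).2 hIb) hInt2
            intro x
            show (ball (0 : EuclideanSpace ℝ (Fin N)) R).indicator G x ≤ η x ^ 2 * G x
            by_cases hx : x ∈ ball (0 : EuclideanSpace ℝ (Fin N)) R
            · rw [Set.indicator_of_mem hx, hη1 x hx]
              nlinarith [hGnn x]
            · rw [Set.indicator_of_notMem hx]
              exact mul_nonneg (sq_nonneg _) (hGnn x)
    calc ∫ x in ball (0 : EuclideanSpace ℝ (Fin N)) R, ‖gradient ui x‖ ^ 2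
        ≤ ∫ x, η x ^ 2 * G x := hL
      _ ≤ 4 * ∫ x, ui x ^ 2 * Gη x := hmain
      _ ≤ 4 * (4 * M ^ 2 / R ^ 2 * ∫ x in A, (u x i) ^ 2) := by linarith [hRHS]
      _ = 16 * M ^ 2 / R ^ 2 * ∫ x in A, (u x i) ^ 2 := by ring
  calc (∑ i, ∫ x in ball (0 : EuclideanSpace ℝ (Fin N)) R,
        ‖gradient (fun y => u y i) x‖ ^ 2)
      ≤ ∑ i, 16 * M ^ 2 / R ^ 2 * ∫ x in A, (u x i) ^ 2 :=
        Finset.sum_le_sum fun i _ => key i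
    _ = 16 * M ^ 2 / R ^ 2 * ∑ i, ∫ x in A, (u x i) ^ 2 := by rw [Finset.mul_sum]
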